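/- Let Ω be a symmetric positive definite 2×2 real matrix and M = (1,1)ᵀ. Among all symmetric positive definite weight matrices W, the GMM sandwich variance V(W) = (MᵀWM)⁻¹ MᵀWΩWᵀM (MᵀWM)⁻¹ is minimized at W = Ω⁻¹, and the minimum value is (MᵀΩ⁻¹M)⁻¹; i.e., for every such W, (MᵀΩ⁻¹M)⁻¹ ≤ V(W). -/

import Mathlib

open Matrix

lemma dot_mulVec_symm {A : Matrix (Fin 2) (Fin 2) ℝ} (hA : A.IsHermitian)
    (x y : Fin 2 → ℝ) : x ⬝ᵥ A.mulVec y = y ⬝ᵥ A.mulVec x := by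
  have hAt : Aᵀ = A := (by simpa using hA : A.IsSymm).eq
  calc x ⬝ᵥ A.mulVec y = (x ᵥ* A) ⬝ᵥ y := by rw [dotProduct_mulVec]
    _ = (Aᵀ.mulVec x) ⬝ᵥ y := by rw [mulVec_transpose]
    _ = y ⬝ᵥ (Aᵀ.mulVec x) := by rw [dotProduct_comm]
    _ = y ⬝ᵥ A.mulVec x := by rw [hAt]

/-- Among symmetric positive definite weight matrices W, the GMM sandwich
variance V(W) = (MᵀWM)⁻¹ MᵀWΩWᵀM (MᵀWM)⁻¹ with M = (1,1)ᵀ is minimized at W = Ω⁻¹,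
where it equals (MᵀΩ⁻¹M)⁻¹. -/
theorem gmm_optimal_weight_minimizes_sandwich_variance
    (Ω : Matrix (Fin 2) (Fin 2) ℝ) (hΩ : Ω.PosDef)
    (M : Fin 2 → ℝ) (hM : M = ![1, 1])
    (V : Matrix (Fin 2) (Fin 2) ℝ → ℝ)
    (hV : ∀ W, V W = (M ⬝ᵥ W.mulVec M)⁻¹ * (M ⬝ᵥ (W * Ω * Wᵀ).mulVec M)
                      * (M ⬝ᵥ W.mulVec M)⁻¹) :
    V Ω⁻¹ = (M ⬝ᵥ (Ω⁻¹).mulVec M)⁻¹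
    ∧ ∀ W : Matrix (Fin 2) (Fin 2) ℝ, W.PosDef →
        (M ⬝ᵥ (Ω⁻¹).mulVec M)⁻¹ ≤ V W := by
  have hM0 : M ≠ 0 := by
    rw [hM]; intro h
    have := congrFun h 0
    simp at this
  have hdet : IsUnit Ω.det := isUnit_iff_ne_zero.mpr hΩ.det_pos.ne'
  have hΩinv := hΩ.inv
  have hΩt : Ωᵀ = Ω := (by simpa using hΩ.1 : Ω.IsSymm).eq
  set a := M ⬝ᵥ (Ω⁻¹).mulVec M with ha_def
  have ha : 0 < a := by simpa only [star_trivial] using hΩinv.dotProduct_mulVec_pos hM0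
  constructor
  · rw [hV]
    have key : Ω⁻¹ * Ω * (Ω⁻¹)ᵀ = Ω⁻¹ := by
      rw [transpose_nonsing_inv, hΩt, Matrix.nonsing_inv_mul _ hdet, one_mul]
    rw [key, ← ha_def, inv_mul_cancel₀ ha.ne', one_mul]
  · intro W hW
    have hWt : Wᵀ = W := (by simpa using hW.1 : W.IsSymm).eq
    set x := W.mulVec M with hx_def
    set p := M ⬝ᵥ W.mulVec M with hp_def
    have hp : 0 < p := by simpa only [star_trivial] using hW.dotProduct_mulVec_pos hM0
    have hx0 : x ≠ 0 := by
      intro h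
      have : p = 0 := by rw [hp_def, ← hx_def, h, dotProduct_zero]
      exact hp.ne' this
    set q := x ⬝ᵥ Ω.mulVec x with hq_def
    have hq : 0 < q := by simpa only [star_trivial] using hΩ.dotProduct_mulVec_pos hx0
    set y := (Ω⁻¹).mulVec M with hy_def
    have hq_eq : M ⬝ᵥ (W * Ω * Wᵀ).mulVec M = q := by
      calc M ⬝ᵥ (W * Ω * Wᵀ).mulVec M
          = M ⬝ᵥ W.mulVec (Ω.mulVec (W.mulVec M)) := by
            rw [mulVec_mulVec, mulVec_mulVec, hWt]
        _ = (Ω.mulVec x) ⬝ᵥ W.mulVec M := dot_mulVec_symm hW.1 M (Ω.mulVec x)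
        _ = x ⬝ᵥ Ω.mulVec x := by rw [← hx_def, dotProduct_comm]
        _ = q := (hq_def).symm
    have hcross : x ⬝ᵥ Ω.mulVec y = p := by
      rw [hy_def, mulVec_mulVec, Matrix.mul_nonsing_inv _ hdet, one_mulVec,
        dotProduct_comm, hp_def, hx_def]
    have hsym : y ⬝ᵥ Ω.mulVec x = p := by
      rw [dot_mulVec_symm hΩ.1]; exact hcross
    have ha2 : y ⬝ᵥ Ω.mulVec y = a := by
      rw [hy_def, mulVec_mulVec, Matrix.mul_nonsing_inv _ hdet, one_mulVec,
        dotProduct_comm]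
    have hCS : p ^ 2 ≤ q * a := by
      have hquad : ∀ t : ℝ, 0 ≤ q * (t * t) + (2 * p) * t + a := by
        intro t
        have h0 := hΩ.posSemidef.dotProduct_mulVec_nonneg (t • x + y)
        simp only [star_trivial, mulVec_add, mulVec_smul, dotProduct_add,
          add_dotProduct, dotProduct_smul, smul_dotProduct, smul_eq_mul] at h0
        rw [hcross, hsym, ha2, ← hq_def] at h0
        nlinarith [h0]
      have hd := discrim_le_zero hquad
      rw [discrim] at hd
      nlinarith [hd]
    rw [hV, hq_eq, ← hp_def]
    have hrw : p⁻¹ * q * p⁻¹ = q / p ^ 2 := by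
      rw [mul_comm p⁻¹ q, mul_assoc, ← mul_inv, ← pow_two, div_eq_mul_inv]
    rw [hrw, show a⁻¹ = 1 / a from (one_div a).symm,
      div_le_div_iff₀ ha (pow_pos hp 2), one_mul]
    exact hCS
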